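/- Let f(y,m) = (y-1)(m^2 + m^{-2}) + y^2 - 3y + 3. Then for any (y,m) in (ℂ*)^2 with f(y,m) = 0, the assignment g1 ↦ [[m,1],[0,m^{-1}]], g2 ↦ [[m,0],[y,m^{-1}]] defines matrices A, B in SL(2,ℂ) satisfying the figure-eight knot group relation A^{-1} B A B^{-1} A = B A^{-1} B A B^{-1}. -/
import Mathlib


open Matrix

theorem riley_rep_satisfies_fig8_relation
    (y m : ℂ) (hy : y ≠ 0) (hm : m ≠ 0)
    (hf : (y - 1) * (m ^ 2 + m⁻¹ ^ 2) + y ^ 2 - 3 * y + 3 = 0) :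
    let A : Matrix (Fin 2) (Fin 2) ℂ := !![m, 1; 0, m⁻¹]
    let B : Matrix (Fin 2) (Fin 2) ℂ := !![m, 0; y, m⁻¹]
    A.det = 1 ∧ B.det = 1 ∧
      A⁻¹ * B * A * B⁻¹ * A = B * A⁻¹ * B * A * B⁻¹ := by
  intro A B
  have hmn : m * m⁻¹ = 1 := mul_inv_cancel₀ hm
  have hdA : A.det = 1 := by
    simp only [A, Matrix.det_fin_two_of]; linear_combination hmn
  have hdB : B.det = 1 := by
    simp only [B, Matrix.det_fin_two_of]; linear_combination hmn
  have hAinv : A⁻¹ = !![m⁻¹, -1; 0, m] := by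
    apply inv_eq_right_inv
    ext i j
    fin_cases i <;> fin_cases j <;>
      simp [A, Matrix.mul_apply, Fin.sum_univ_two]
    all_goals first
      | exact mul_inv_cancel₀ hm
      | exact inv_mul_cancel₀ hm
      | ring
  have hBinv : B⁻¹ = !![m⁻¹, 0; -y, m] := by
    apply inv_eq_right_inv
    ext i j
    fin_cases i <;> fin_cases j <;>
      simp [B, Matrix.mul_apply, Fin.sum_univ_two]
    all_goals first
      | exact mul_inv_cancel₀ hm
      | exact inv_mul_cancel₀ hm
      | ring
  refine ⟨hdA, hdB, ?_⟩
  rw [hAinv, hBinv]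
  show (!![m⁻¹, -1; 0, m] * B * A * !![m⁻¹, 0; -y, m] * A =
      B * !![m⁻¹, -1; 0, m] * B * A * !![m⁻¹, 0; -y, m])
  simp only [A, B, Matrix.mul_fin_two]
  ext i j
  fin_cases i <;> fin_cases j <;>
    simp only [Matrix.cons_val', Matrix.cons_val_zero, Matrix.cons_val_one,
      Matrix.head_cons, Matrix.head_fin_const, Matrix.empty_val',
      Matrix.cons_val_fin_one, Matrix.of_apply, Fin.mk_zero, Fin.mk_one]
  · ring
  · linear_combination hf + (3 - 3*y - m⁻¹^2 + 3*m*m⁻¹ - m^2) * hmn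
  · linear_combination (-y) * hf + (3*y^2 + m⁻¹^2*y - 3*m*m⁻¹*y + m^2*y - 3*y) * hmn
  · ring
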